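/- Let G be a finite solvable group, let N be a minimal normal subgroup of G contained in the Frattini subgroup Φ(G), let p be the prime dividing |N|, and let K be a normal subgroup of G containing N. Suppose that K centralizes every chief p-factor of G between N and K; that is, for all normal subgroups M₁ < M₂ of G with N ≤ M₁, M₂ ≤ K, such that M₂/M₁ is a chief factor of G of order a power of p, the commutator [K, M₂] is contained in M₁. Then K centralizes N, i.e., [K, N] = {1}. -/

import Mathlib

/-- `M₂/M₁` is a chief factor of `G`: both are normal, `M₁ < M₂`, and there is
no normal subgroup strictly between them. -/
def IsChiefFactor (G : Type*) [Group G] (M₁ M₂ : Subgroup G) : Prop :=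
  M₁.Normal ∧ M₂.Normal ∧ M₁ < M₂ ∧
    ¬ ∃ M : Subgroup G, M.Normal ∧ M₁ < M ∧ M < M₂

namespace FrattiniChief
open Subgroup
open scoped Pointwise commutatorElement

variable {G : Type*} [Group G]

lemma card_lt_of_lt [Finite G] {A B : Subgroup G} (h : A < B) : Nat.card A < Nat.card B := by
  have h1 : (A : Set G) ⊂ (B : Set G) := by
    rw [Set.ssubset_iff_of_subset (by exact_mod_cast h.le)]
    obtain ⟨x, hxB, hxA⟩ := SetLike.exists_of_lt h
    exact ⟨x, hxB, hxA⟩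
  have := Set.ncard_lt_ncard h1 (Set.toFinite _)
  exact this

lemma exists_max_subgroup [Finite G] (P : Subgroup G → Prop) (h : ∃ H, P H) :
    ∃ H, P H ∧ ∀ H', P H' → Nat.card H' ≤ Nat.card H := by
  obtain ⟨H0, h0⟩ := h
  haveI : Nonempty {H : Subgroup G // P H} := ⟨⟨H0, h0⟩⟩
  obtain ⟨⟨H, hH⟩, hmax⟩ := Finite.exists_max (fun H : {H : Subgroup G // P H} => Nat.card H.1)
  exact ⟨H, hH, fun H' h' => hmax ⟨H', h'⟩⟩

lemma exists_min_subgroup [Finite G] (P : Subgroup G → Prop) (h : ∃ H, P H) :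
    ∃ H, P H ∧ ∀ H', P H' → Nat.card H ≤ Nat.card H' := by
  obtain ⟨H0, h0⟩ := h
  haveI : Nonempty {H : Subgroup G // P H} := ⟨⟨H0, h0⟩⟩
  obtain ⟨⟨H, hH⟩, hmin⟩ := Finite.exists_min (fun H : {H : Subgroup G // P H} => Nat.card H.1)
  exact ⟨H, hH, fun H' h' => hmin ⟨H', h'⟩⟩

lemma card_map_mul {H : Type*} [Group H] [Finite G] (f : G →* H) (A : Subgroup G) :
    Nat.card (A.map f) * Nat.card (f.ker ⊓ A : Subgroup G) = Nat.card A := by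
  classical
  let φ : A →* H := f.comp A.subtype
  have hrange : φ.range = A.map f := by
    ext x
    simp [φ, MonoidHom.mem_range, Subgroup.mem_map]
  have hker : φ.ker = (f.ker ⊓ A).subgroupOf A := by
    ext a
    simp [φ, MonoidHom.mem_ker, Subgroup.mem_subgroupOf, a.2]
  have h1 : Nat.card A = Nat.card (A ⧸ φ.ker) * Nat.card φ.ker :=
    Subgroup.card_eq_card_quotient_mul_card_subgroup φ.ker
  have h2 : Nat.card (A ⧸ φ.ker) = Nat.card φ.range :=
    Nat.card_congr (QuotientGroup.quotientKerEquivRange φ).toEquiv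
  have h3 : Nat.card φ.range = Nat.card (A.map f) := by rw [hrange]
  have h4 : Nat.card φ.ker = Nat.card (f.ker ⊓ A : Subgroup G) := by
    rw [hker]
    exact Nat.card_congr (Subgroup.subgroupOfEquivOfLe inf_le_right).toEquiv
  rw [h1, h2, h3, h4]

lemma sol_step [Group.IsSolvable G] {B K : Subgroup G} (hB : B.Normal)
    (h : ⁅K, K⁆ ⊔ B = K) : K ≤ B := by
  haveI := hB
  set π := QuotientGroup.mk' B with hπ
  have hmapB : B.map π = ⊥ := by
    rw [Subgroup.map_eq_bot_iff, QuotientGroup.ker_mk']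
  have hKmap : ∀ m : ℕ, K.map π ≤ derivedSeries (G ⧸ B) m := by
    intro m
    induction m with
    | zero => exact le_top
    | succ m ih =>
      have : K.map π = ⁅K.map π, K.map π⁆ := by
        conv_lhs => rw [← h]
        rw [Subgroup.map_sup, hmapB, sup_bot_eq, Subgroup.map_commutator]
      rw [this, derivedSeries_succ]
      exact Subgroup.commutator_mono ih ih
  obtain ⟨m, hm⟩ := (inferInstance : Group.IsSolvable (G ⧸ B)).solvable
  have hbot : K.map π ≤ ⊥ := hm ▸ hKmap m
  intro k hk
  have : π k = 1 := by
    have := hbot (Subgroup.mem_map_of_mem π hk)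
    simpa using this
  rwa [← QuotientGroup.ker_mk' B, MonoidHom.mem_ker]

lemma centralizer_normal {N : Subgroup G} (hN : N.Normal) :
    (centralizer (N : Set G)).Normal := by
  constructor
  intro c hc g
  rw [Subgroup.mem_centralizer_iff] at hc ⊢
  intro n hn
  have hgn : g⁻¹ * n * g ∈ N := by
    have := hN.conj_mem n hn g⁻¹
    simpa using this
  have := hc _ hgn
  have h2 : n * (g * c * g⁻¹) = (g * c * g⁻¹) * n := by
    have h3 := congrArg (fun x => g * x * g⁻¹) this
    simpa [mul_assoc] using h3
  exact h2

lemma exists_fixed [Finite G] {p : ℕ} (hp : p.Prime) {N A : Subgroup G} (hN : N.Normal)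
    (hA : IsPGroup p A) (hpN : p ∣ Nat.card N) :
    ∃ n ∈ N, n ≠ 1 ∧ ∀ a ∈ A, a * n = n * a := by
  haveI : Fact p.Prime := ⟨hp⟩
  letI sm : SMul A N := ⟨fun a n => ⟨a.1 * n.1 * a.1⁻¹, hN.conj_mem _ n.2 _⟩⟩
  have smul_def : ∀ (a : A) (n : N), (a • n : N).1 = a.1 * n.1 * a.1⁻¹ := fun _ _ => rfl
  letI ma : MulAction A N :=
    { one_smul := by intro n; apply Subtype.ext; simp [smul_def]
      mul_smul := by intro a b n; apply Subtype.ext; simp [smul_def]; group }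
  have hmod := hA.card_modEq_card_fixedPoints N
  have hone : (1 : N) ∈ MulAction.fixedPoints A N := by
    intro a; apply Subtype.ext; simp [smul_def]
  have hpos : 0 < Nat.card (MulAction.fixedPoints A N) :=
    Nat.card_pos_iff.mpr ⟨⟨⟨1, hone⟩⟩, Set.Finite.to_subtype (Set.toFinite _)⟩
  have hdvd : p ∣ Nat.card (MulAction.fixedPoints A N) :=
    Nat.modEq_zero_iff_dvd.mp (hmod.symm.trans (Nat.modEq_zero_iff_dvd.mpr hpN))
  have hlt : 1 < Nat.card (MulAction.fixedPoints A N) :=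
    lt_of_lt_of_le hp.one_lt (Nat.le_of_dvd hpos hdvd)
  haveI hnt : Nontrivial (MulAction.fixedPoints A N) :=
    Finite.one_lt_card_iff_nontrivial.mp hlt
  obtain ⟨x, y, hxy⟩ := hnt.exists_pair_ne
  have hex : ∃ z : MulAction.fixedPoints A N, (z : N) ≠ 1 := by
    by_contra hcon
    push_neg at hcon
    exact hxy (Subtype.ext ((hcon x).trans (hcon y).symm))
  obtain ⟨⟨z, hz⟩, hzne⟩ := hex
  refine ⟨z.1, z.2, ?_, ?_⟩
  · intro h; exact hzne (Subtype.ext h)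
  · intro a ha
    have := hz ⟨a, ha⟩
    have h2 : a * z.1 * a⁻¹ = z.1 := by
      have := congrArg Subtype.val this
      simpa [smul_def] using this
    calc a * z.1 = (a * z.1 * a⁻¹) * a := by group
    _ = z.1 * a := by rw [h2]

lemma pow_order_coprime_eq_one {x : G} {p m : ℕ} (hcop : Nat.Coprime m p)
    (hx : ∃ k, x ^ p ^ k = 1) (hm : x ^ m = 1) : x = 1 := by
  obtain ⟨k, hk⟩ := hx
  have h1 : orderOf x ∣ p ^ k := orderOf_dvd_of_pow_eq_one hk
  have h2 : orderOf x ∣ m := orderOf_dvd_of_pow_eq_one hm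
  have : orderOf x = 1 :=
    Nat.eq_one_of_dvd_coprimes (hcop.pow_right k) h2 h1
  exact orderOf_eq_one_iff.mp this

lemma mem_pgroup {P : Subgroup G} {p : ℕ} (hP : IsPGroup p P) {x : G} (hx : x ∈ P) :
    ∃ k, x ^ p ^ k = 1 := by
  obtain ⟨k, hk⟩ := hP ⟨x, hx⟩
  exact ⟨k, by simpa [Subtype.ext_iff] using hk⟩

lemma relindex_pow {p : ℕ} (hp : p.Prime) [Finite G] {R L : Subgroup G}
    (hRL : R ≤ L) (hL : IsPGroup p L) : ∃ k, R.relIndex L = p ^ k := by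
  haveI : Fact p.Prime := ⟨hp⟩
  obtain ⟨t, ht⟩ := IsPGroup.iff_card.mp hL
  have hdvd : R.relIndex L ∣ Nat.card L := Subgroup.index_dvd_card (R.subgroupOf L)
  rw [ht] at hdvd
  exact (Nat.dvd_prime_pow hp).mp hdvd |>.imp (fun k hk => hk.2)

/-- Per-element stability: a `p'`-element of `K` centralizing `N` centralizes every
normal subgroup `L` with `N ≤ L ≤ Pst` where `Pst ≤ K` is a normal `p`-subgroup,
given the chief-factor centralization hypothesis. -/
lemma stab_chain [Finite G] [Group.IsSolvable G] {p : ℕ} (hp : p.Prime)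
    {N K Pst : Subgroup G} (hNnormal : N.Normal)
    (hPp : IsPGroup p Pst) (hPK : Pst ≤ K)
    (hcent : ∀ M₁ M₂ : Subgroup G, N ≤ M₁ → M₂ ≤ K → IsChiefFactor G M₁ M₂ →
      (∃ k : ℕ, M₁.relIndex M₂ = p ^ k) → ⁅K, M₂⁆ ≤ M₁) :
    ∀ (c : ℕ) (L : Subgroup G), Nat.card L ≤ c → L.Normal → N ≤ L → L ≤ Pst →
      ∀ x ∈ K, Nat.Coprime (orderOf x) p → (∀ n ∈ N, x * n = n * x) →
      ∀ g ∈ L, x * g = g * x := by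
  haveI : Fact p.Prime := ⟨hp⟩
  intro c
  induction c with
  | zero =>
    intro L hcard
    have : 0 < Nat.card L := Nat.card_pos
    omega
  | succ c IH =>
    intro L hcard hLnormal hNL hLP x hxK hxcop hxN g hgL
    by_cases hLN : L ≤ N
    · exact hxN g (hLN hgL)
    · have hNltL : N < L := lt_of_le_of_ne hNL (fun h => hLN (le_of_eq h.symm))
      obtain ⟨R, ⟨hRnormal, hNR, hRL⟩, hRmax⟩ :=
        exists_max_subgroup (fun R => R.Normal ∧ N ≤ R ∧ R < L)
          ⟨N, hNnormal, le_refl N, hNltL⟩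
      have hchief : IsChiefFactor G R L := by
        refine ⟨hRnormal, hLnormal, hRL, ?_⟩
        rintro ⟨W, hWnormal, hRW, hWL⟩
        have h1 : Nat.card W ≤ Nat.card R :=
          hRmax W ⟨hWnormal, le_trans hNR hRW.le, hWL⟩
        exact absurd (card_lt_of_lt hRW) (not_lt.mpr h1)
      have hLK : L ≤ K := le_trans hLP hPK
      have hcomm : ⁅K, L⁆ ≤ R :=
        hcent R L hNR hLK hchief (relindex_pow hp hRL.le (hPp.to_le hLP))
      -- IH : x centralizes R
      have hxR : ∀ r ∈ R, x * r = r * x := by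
        intro r hr
        have hcR : Nat.card R ≤ c := by
          have := card_lt_of_lt hRL
          omega
        exact IH R hcR hRnormal hNR (le_trans hRL.le hLP) x hxK hxcop hxN r hr
      -- the commutator c₀ = [x, g]
      set c₀ := x * g * x⁻¹ * g⁻¹ with hc₀def
      have hc₀R : c₀ ∈ R := by
        have : ⁅x, g⁆ ∈ ⁅K, L⁆ := Subgroup.commutator_mem_commutator hxK hgL
        exact hcomm (by simpa [commutatorElement_def, hc₀def] using this)
      have hxc₀ : x * c₀ = c₀ * x := hxR c₀ hc₀R
      have hstep : x * g = c₀ * g * x := by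
        rw [hc₀def]; group
      have hiter : ∀ j : ℕ, x ^ j * g = c₀ ^ j * g * x ^ j := by
        intro j
        induction j with
        | zero => simp
        | succ j ihj =>
          have hcomm' : Commute x c₀ := hxc₀
          calc x ^ (j + 1) * g = x * (x ^ j * g) := by rw [pow_succ']; group
          _ = x * (c₀ ^ j * g * x ^ j) := by rw [ihj]
          _ = (x * c₀ ^ j) * g * x ^ j := by group
          _ = (c₀ ^ j * x) * g * x ^ j := by rw [(hcomm'.pow_right j).eq]
          _ = c₀ ^ j * (x * g) * x ^ j := by group
          _ = c₀ ^ j * (c₀ * g * x) * x ^ j := by rw [hstep]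
          _ = c₀ ^ (j + 1) * g * x ^ (j + 1) := by rw [pow_succ, pow_succ']; group
      have hfin := hiter (orderOf x)
      rw [pow_orderOf_eq_one x] at hfin
      have hc₀pow : c₀ ^ orderOf x = 1 := by
        have : (1 : G) * g = c₀ ^ orderOf x * g * 1 := hfin
        have h2 : g = c₀ ^ orderOf x * g := by simpa using this
        have h3 := congrArg (fun y => y * g⁻¹) h2
        simpa using h3.symm
      have hc₀1 : c₀ = 1 :=
        pow_order_coprime_eq_one hxcop (mem_pgroup hPp (le_trans hRL.le hLP hc₀R)) hc₀pow
      rw [hstep, hc₀1, one_mul]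

open Subgroup

variable {G : Type*} [Group G]

/-- Coprime-action climb: if `M ≤ K` is a normal `p`-subgroup, `Qt ≤ K` a `q`-subgroup
(`q ≠ p`), and `K` centralizes all `p`-chief factors between `N` and `K`,
then every normal `L` with `N ≤ L ≤ M` lies in `N ⊔ C_G(Qt)`. -/
lemma climb [Finite G] {p q : ℕ} (hp : p.Prime) (hq : q.Prime) (hqp : q ≠ p)
    {N K M Qt : Subgroup G} (hNnormal : N.Normal)
    (hMp : IsPGroup p M) (hMK : M ≤ K) (hQK : Qt ≤ K) (hQq : IsPGroup q Qt)
    (hcent : ∀ M₁ M₂ : Subgroup G, N ≤ M₁ → M₂ ≤ K → IsChiefFactor G M₁ M₂ →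
      (∃ k : ℕ, M₁.relIndex M₂ = p ^ k) → ⁅K, M₂⁆ ≤ M₁) :
    ∀ (c : ℕ) (L : Subgroup G), Nat.card L ≤ c → L.Normal → N ≤ L → L ≤ M →
      L ≤ N ⊔ centralizer (Qt : Set G) := by
  haveI : Fact p.Prime := ⟨hp⟩
  haveI : Fact q.Prime := ⟨hq⟩
  intro c
  induction c with
  | zero =>
    intro L hcard
    have : 0 < Nat.card L := Nat.card_pos
    omega
  | succ c IH =>
    intro L hcard hLnormal hNL hLM
    by_cases hLN : L ≤ N
    · exact le_trans hLN le_sup_left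
    · have hNltL : N < L := lt_of_le_of_ne hNL (fun h => hLN (le_of_eq h.symm))
      obtain ⟨R, ⟨hRnormal, hNR, hRL⟩, hRmax⟩ :=
        exists_max_subgroup (fun R => R.Normal ∧ N ≤ R ∧ R < L)
          ⟨N, hNnormal, le_refl N, hNltL⟩
      have hchief : IsChiefFactor G R L := by
        refine ⟨hRnormal, hLnormal, hRL, ?_⟩
        rintro ⟨W, hWnormal, hRW, hWL⟩
        exact absurd (card_lt_of_lt hRW)
          (not_lt.mpr (hRmax W ⟨hWnormal, le_trans hNR hRW.le, hWL⟩))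
      have hLK : L ≤ K := le_trans hLM hMK
      have hcomm : ⁅K, L⁆ ≤ R :=
        hcent R L hNR hLK hchief (relindex_pow hp hRL.le (hMp.to_le hLM))
      have hRrec : R ≤ N ⊔ centralizer (Qt : Set G) := by
        have hcR : Nat.card R ≤ c := by
          have := card_lt_of_lt hRL
          omega
        exact IH R hcR hRnormal hNR (le_trans hRL.le hLM)
      -- now handle an element g of L
      intro g hgL
      -- the coset g•R as a set
      set S : Set G := {h : G | g⁻¹ * h ∈ R} with hSdef
      have hSsub : ∀ h ∈ S, h ∈ L := by
        intro h hh
        have : g * (g⁻¹ * h) ∈ L := L.mul_mem hgL (hRL.le hh)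
        simpa using this
      -- action of Qt on S by conjugation
      letI sm : SMul Qt S := ⟨fun x h => ⟨x.1 * h.1 * x.1⁻¹, by
        have hhL : h.1 ∈ L := hSsub h.1 h.2
        have hcom : x.1 * h.1 * x.1⁻¹ * h.1⁻¹ ∈ R := by
          have : ⁅x.1, h.1⁆ ∈ ⁅K, L⁆ :=
            Subgroup.commutator_mem_commutator (hQK x.2) hhL
          exact hcomm (by simpa [commutatorElement_def] using this)
        have hmem : (g⁻¹ * (x.1 * h.1 * x.1⁻¹ * h.1⁻¹) * g) * (g⁻¹ * h.1) ∈ R :=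
          R.mul_mem (by simpa using hRnormal.conj_mem _ hcom g⁻¹) h.2
        have heq : g⁻¹ * (x.1 * h.1 * x.1⁻¹) =
            (g⁻¹ * (x.1 * h.1 * x.1⁻¹ * h.1⁻¹) * g) * (g⁻¹ * h.1) := by group
        show g⁻¹ * (x.1 * h.1 * x.1⁻¹) ∈ R
        rw [heq]; exact hmem⟩⟩
    
      have smul_def : ∀ (x : Qt) (h : S), (x • h : S).1 = x.1 * h.1 * x.1⁻¹ := fun _ _ => rfl
      letI ma : MulAction Qt S :=
        { one_smul := by intro h; apply Subtype.ext; simp [smul_def]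
          mul_smul := by intro a b h; apply Subtype.ext; simp [smul_def]; group }
      -- |S| = |R| is a power of p, so q does not divide it
      have hcardS : Nat.card S = Nat.card R := by
        apply Nat.card_congr
        refine ⟨fun h => ⟨g⁻¹ * h.1, h.2⟩, fun r => ⟨g * r.1, by simp [hSdef]⟩, ?_, ?_⟩
        · intro h; apply Subtype.ext; simp
        · intro r; apply Subtype.ext; simp
      have hqS : ¬ q ∣ Nat.card S := by
        obtain ⟨t, ht⟩ := IsPGroup.iff_card.mp (hMp.to_le (le_trans hRL.le hLM))
        rw [hcardS, ht]
        intro hdvd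
        exact hqp ((Nat.prime_dvd_prime_iff_eq hq hp).mp (hq.dvd_of_dvd_pow hdvd))
      obtain ⟨⟨h, hhS⟩, hfix⟩ := hQq.nonempty_fixed_point_of_prime_not_dvd_card S hqS
      have hhC : h ∈ centralizer (Qt : Set G) := by
        rw [Subgroup.mem_centralizer_iff]
        intro y hy
        have := hfix ⟨y, hy⟩
        have h2 : y * h * y⁻¹ = h := by
          have := congrArg Subtype.val this
          simpa [smul_def] using this
        calc y * h = (y * h * y⁻¹) * y := by group
        _ = h * y := by rw [h2]
      -- g = h * (g⁻¹h)⁻¹ ∈ centralizer * R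
      have hgih : g = h * (g⁻¹ * h)⁻¹ := by group
      have hmem1 : h ∈ N ⊔ centralizer (Qt : Set G) := le_sup_right (α := Subgroup G) hhC
      have hmem2 : (g⁻¹ * h)⁻¹ ∈ N ⊔ centralizer (Qt : Set G) :=
        (N ⊔ centralizer (Qt : Set G)).inv_mem (hRrec hhS)
      rw [hgih]
      exact (N ⊔ centralizer (Qt : Set G)).mul_mem hmem1 hmem2

open Subgroup

variable {G : Type*} [Group G]

/-- The top chief factor `K/M` is an elementary abelian `r`-group, and any Sylow
`r`-subgroup of `K` covers it. -/
lemma top_structure [Finite G] [Group.IsSolvable G] {M K : Subgroup G}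
    (hM : M.Normal) (hK : K.Normal) (hMK : M < K)
    (hmax : ∀ W : Subgroup G, W.Normal → M ≤ W → W ≤ K → W = M ∨ W = K) :
    ∃ r : ℕ, r.Prime ∧ (∃ m, M.relIndex K = r ^ m) ∧
      ∀ Q : Sylow r K, M ⊔ map K.subtype ↑Q = K := by
  haveI := hM
  haveI := hK
  -- step 1 : ⁅K,K⁆ ≤ M
  have hKK : ⁅K, K⁆ ≤ M := by
    rcases hmax (⁅K, K⁆ ⊔ M) inferInstance le_sup_right
      (sup_le (Subgroup.commutator_le_right K K) hMK.le) with h | h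
    · exact le_trans le_sup_left h.le
    · exact absurd (sol_step hM h) hMK.not_ge
  set π := QuotientGroup.mk' M with hπdef
  have hπsurj : Function.Surjective π := QuotientGroup.mk'_surjective M
  set Kb := K.map π with hKbdef
  haveI hKbnormal : Kb.Normal := hK.map π hπsurj
  -- all elements of Kb commute
  have hab : ∀ x ∈ Kb, ∀ y ∈ Kb, x * y = y * x := by
    rintro x hx y hy
    rw [hKbdef] at hx hy
    obtain ⟨a, ha, rfl⟩ := hx
    obtain ⟨b, hb, rfl⟩ := hy
    have hM' : ⁅a, b⁆ ∈ M := hKK (Subgroup.commutator_mem_commutator ha hb)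
    have h1 : π ⁅a, b⁆ = 1 := by
      rwa [← MonoidHom.mem_ker, QuotientGroup.ker_mk']
    have h2 : ⁅π a, π b⁆ = 1 := by
      rw [← map_commutatorElement]; exact h1
    exact commutatorElement_eq_one_iff_mul_comm.mp h2
  -- card Kb = relindex M K
  have hcards : Nat.card Kb * Nat.card M = Nat.card K := by
    have h := card_map_mul π K
    rwa [QuotientGroup.ker_mk', inf_of_le_left hMK.le] at h
  have hrelcard : M.relIndex K = Nat.card Kb := by
    have h1 : (M.subgroupOf K).index * Nat.card (M.subgroupOf K) = Nat.card K :=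
      Subgroup.index_mul_card (M.subgroupOf K)
    have h2 : Nat.card (M.subgroupOf K) = Nat.card M :=
      Nat.card_congr (Subgroup.subgroupOfEquivOfLe hMK.le).toEquiv
    rw [h2] at h1
    have := h1.trans hcards.symm
    exact Nat.eq_of_mul_eq_mul_right Nat.card_pos this
  have hrelne : M.relIndex K ≠ 1 := by
    intro h
    exact hMK.not_ge (Subgroup.relIndex_eq_one.mp h)
  set r := (M.relIndex K).minFac with hrdef
  have hrprime : r.Prime := Nat.minFac_prime hrelne
  haveI : Fact r.Prime := ⟨hrprime⟩
  have hrdvd : r ∣ Nat.card Kb := hrelcard ▸ Nat.minFac_dvd _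
  -- the r-torsion subgroup of Kb
  have hTmul : ∀ {x y : G ⧸ M}, x ∈ Kb ∧ x ^ r = 1 → y ∈ Kb ∧ y ^ r = 1 →
      (x * y) ∈ Kb ∧ (x * y) ^ r = 1 := by
    rintro x y ⟨hx, hxr⟩ ⟨hy, hyr⟩
    refine ⟨Kb.mul_mem hx hy, ?_⟩
    have hcomm : Commute x y := hab x hx y hy
    rw [hcomm.mul_pow, hxr, hyr, one_mul]
  set Tb : Subgroup (G ⧸ M) :=
    { carrier := {x | x ∈ Kb ∧ x ^ r = 1}
      one_mem' := ⟨Kb.one_mem, one_pow r⟩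
      mul_mem' := fun hx hy => hTmul hx hy
      inv_mem' := by
        rintro x ⟨hx, hxr⟩
        exact ⟨Kb.inv_mem hx, by rw [inv_pow, hxr, inv_one]⟩ } with hTbdef
  have hTbnormal : Tb.Normal := by
    constructor
    rintro x ⟨hx, hxr⟩ g
    refine ⟨hKbnormal.conj_mem x hx g, ?_⟩
    rw [conj_pow, hxr, mul_one, mul_inv_cancel]
  -- pull back
  set Kr := Tb.comap π with hKrdef
  have hKrnormal : Kr.Normal := hTbnormal.comap π
  have hMKr : M ≤ Kr := by
    intro m hm
    have : π m = 1 := by rwa [← MonoidHom.mem_ker, QuotientGroup.ker_mk']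
    show π m ∈ Tb
    rw [this]; exact Tb.one_mem
  have hKrK : Kr ≤ K := by
    intro x hx
    have hx1 : π x ∈ Kb := (show π x ∈ Tb from hx).1
    have h2 : x ∈ (K.map π).comap π := hx1
    rw [Subgroup.comap_map_eq, QuotientGroup.ker_mk', sup_of_le_left hMK.le] at h2
    exact h2
  -- Kr ≠ M since Kb has an element of order r
  have hKrK' : Kr = K := by
    rcases hmax Kr hKrnormal hMKr hKrK with h | h
    · exfalso
      haveI : Fintype Kb := Fintype.ofFinite _
      rw [Nat.card_eq_fintype_card] at hrdvd
      obtain ⟨xb, hxb⟩ := exists_prime_orderOf_dvd_card r hrdvd (G := Kb)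
      have hxbne : (xb : G ⧸ M) ≠ 1 := by
        intro h1
        have : orderOf xb = 1 := by
          rw [← orderOf_eq_one_iff.mpr (Subtype.ext h1)]
        rw [hxb] at this
        exact hrprime.one_lt.ne' this
      obtain ⟨x, hxK, hxeq⟩ := (Subgroup.mem_map).mp xb.2
      have hxKr : x ∈ Kr := by
        show π x ∈ Tb
        refine ⟨by rw [hxeq]; exact xb.2, ?_⟩
        rw [hxeq]
        have : (xb : G ⧸ M) ^ r = 1 := by
          have := pow_orderOf_eq_one xb
          rw [hxb] at this
          exact_mod_cast congrArg Subtype.val this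
        exact this
      rw [h] at hxKr
      have : π x = 1 := by rwa [← MonoidHom.mem_ker, QuotientGroup.ker_mk']
      rw [hxeq] at this
      exact hxbne this
    · exact h
  -- Kb is an r-group
  have hKbr : IsPGroup r Kb := by
    intro xb
    refine ⟨1, ?_⟩
    have hmem : (xb : G ⧸ M) ∈ Kb := xb.2
    obtain ⟨x, hxK, hxeq⟩ := Subgroup.mem_map.mp hmem
    have hxKr : x ∈ Kr := hKrK' ▸ hxK
    have hxr : (π x) ^ r = 1 := (show π x ∈ Tb from hxKr).2
    apply Subtype.ext
    rw [pow_one]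
    push_cast
    rw [← hxeq]
    exact hxr
  obtain ⟨m, hm⟩ := IsPGroup.iff_card.mp hKbr
  refine ⟨r, hrprime, ⟨m, by rw [hrelcard, hm]⟩, ?_⟩
  -- Sylow covering
  intro Q
  set Qt := map K.subtype (Q : Subgroup K) with hQtdef
  have hQtK : Qt ≤ K := Subgroup.map_subtype_le _
  set J := M ⊔ Qt with hJdef
  have hJK : J ≤ K := sup_le hMK.le hQtK
  have hd1 : J.relIndex K ∣ M.relIndex K := Subgroup.relIndex_dvd_of_le_left K le_sup_left
  have hd2 : J.relIndex K ∣ Qt.relIndex K := Subgroup.relIndex_dvd_of_le_left K le_sup_right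
  have hQtrel : Qt.relIndex K = (Q : Subgroup K).index := by
    rw [hQtdef, Subgroup.relIndex, Subgroup.subgroupOf,
      Subgroup.comap_map_eq_self_of_injective K.subtype_injective]
  have hnotdvd : ¬ r ∣ (Q : Subgroup K).index := Q.not_dvd_index
  have hrelpow : M.relIndex K = r ^ m := by rw [hrelcard, hm]
  rw [hrelpow] at hd1
  obtain ⟨j, _, hj⟩ := (Nat.dvd_prime_pow hrprime).mp hd1
  have hj0 : j = 0 := by
    by_contra hj0
    apply hnotdvd
    have : r ∣ J.relIndex K := by
      rw [hj]
      exact dvd_pow_self r hj0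
    exact this.trans (hQtrel ▸ hd2)
  have : J.relIndex K = 1 := by rw [hj, hj0, pow_zero]
  have hKJ : K ≤ J := Subgroup.relIndex_eq_one.mp this
  exact le_antisymm hJK hKJ

open Subgroup

variable {G : Type*} [Group G]

lemma inf_normal {A B : Subgroup G} (hA : A.Normal) (hB : B.Normal) : (A ⊓ B).Normal := by
  constructor
  intro x hx g
  exact Subgroup.mem_inf.mpr ⟨hA.conj_mem _ (Subgroup.mem_inf.mp hx).1 g,
    hB.conj_mem _ (Subgroup.mem_inf.mp hx).2 g⟩

lemma relindex_mul_card_of_le [Finite G] {A B : Subgroup G} (h : A ≤ B) :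
    A.relIndex B * Nat.card A = Nat.card B := by
  have h1 := Subgroup.index_mul_card (A.subgroupOf B)
  have h2 : Nat.card (A.subgroupOf B) = Nat.card A :=
    Nat.card_congr (Subgroup.subgroupOfEquivOfLe h).toEquiv
  rw [h2] at h1
  exact h1

/-- If `x` commutes with `c₀ := [x,g]` and `c₀` has order coprime to that of `x`
(being in a `p`-group with `orderOf x` coprime to `p`), then `x` and `g` commute. -/
lemma commutator_trick [Finite G] {p : ℕ} {x g : G}
    (hcop : Nat.Coprime (orderOf x) p)
    (hxc : x * (x * g * x⁻¹ * g⁻¹) = (x * g * x⁻¹ * g⁻¹) * x)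
    (hpow : ∃ k, (x * g * x⁻¹ * g⁻¹) ^ p ^ k = 1) : x * g = g * x := by
  set c₀ := x * g * x⁻¹ * g⁻¹ with hc₀def
  have hstep : x * g = c₀ * g * x := by rw [hc₀def]; group
  have hcomm' : Commute x c₀ := hxc
  have hiter : ∀ j : ℕ, x ^ j * g = c₀ ^ j * g * x ^ j := by
    intro j
    induction j with
    | zero => simp
    | succ j ihj =>
      calc x ^ (j + 1) * g = x * (x ^ j * g) := by rw [pow_succ']; group
      _ = x * (c₀ ^ j * g * x ^ j) := by rw [ihj]
      _ = (x * c₀ ^ j) * g * x ^ j := by group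
      _ = (c₀ ^ j * x) * g * x ^ j := by rw [(hcomm'.pow_right j).eq]
      _ = c₀ ^ j * (x * g) * x ^ j := by group
      _ = c₀ ^ j * (c₀ * g * x) * x ^ j := by rw [hstep]
      _ = c₀ ^ (j + 1) * g * x ^ (j + 1) := by rw [pow_succ, pow_succ']; group
  have hfin := hiter (orderOf x)
  rw [pow_orderOf_eq_one x] at hfin
  have hc₀pow : c₀ ^ orderOf x = 1 := by
    have h2 : g = c₀ ^ orderOf x * g := by simpa using hfin
    have h3 := congrArg (fun y => y * g⁻¹) h2
    simpa using h3.symm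
  have hc₀1 : c₀ = 1 := pow_order_coprime_eq_one hcop hpow hc₀pow
  rw [hstep, hc₀1, one_mul]

/-- The `p`-regular (coprime) component of an element. -/
lemma pcomp_spec [Finite G] {p : ℕ} (hp : p.Prime) (x : G) :
    Nat.Coprime (orderOf (x ^ p ^ (orderOf x).factorization p)) p ∧
      (x ^ p ^ (orderOf x).factorization p = 1 → ∃ k, x ^ p ^ k = 1) := by
  have hn : orderOf x ≠ 0 := (orderOf_pos x).ne'
  constructor
  · have hdvd : p ^ (orderOf x).factorization p ∣ orderOf x := Nat.ordProj_dvd _ _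
    have hpk : (p : ℕ) ^ (orderOf x).factorization p ≠ 0 :=
      (pow_pos hp.pos _).ne'
    rw [orderOf_pow' x hpk, Nat.gcd_eq_right hdvd]
    exact (Nat.coprime_ordCompl hp hn).symm
  · intro h
    exact ⟨(orderOf x).factorization p, h⟩

lemma centralizer_le_normalizer' {Qt : Subgroup G} :
    centralizer (Qt : Set G) ≤ normalizer (Qt : Set G) := by
  intro c hc
  rw [Subgroup.mem_normalizer_iff]
  intro y
  constructor
  · intro hy
    have := Subgroup.mem_centralizer_iff.mp hc y hy
    have heq : c * y * c⁻¹ = y := by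
      rw [← this]; group
    rw [heq]; exact hy
  · intro hy
    have hcz := Subgroup.mem_centralizer_iff.mp hc _ hy
    -- hcz : (c*y*c⁻¹) * c = c * (c*y*c⁻¹)
    have heq : y = c * y * c⁻¹ := by
      calc y = c⁻¹ * ((c * y * c⁻¹) * c) := by group
      _ = c⁻¹ * (c * (c * y * c⁻¹)) := by rw [hcz]
      _ = c * y * c⁻¹ := by group
    rw [heq]; exact hy

open Subgroup

universe u

theorem main (n : ℕ) : ∀ (G : Type u) [Group G] [Finite G] [Group.IsSolvable G]
    (N : Subgroup G), N.Normal → N ≠ ⊥ →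
    (∀ M : Subgroup G, M.Normal → M ≤ N → M = ⊥ ∨ M = N) →
    N ≤ frattini G →
    ∀ p : ℕ, p.Prime → p ∣ Nat.card N →
    ∀ K : Subgroup G, K.Normal → N ≤ K →
    (∀ M₁ M₂ : Subgroup G, N ≤ M₁ → M₂ ≤ K → IsChiefFactor G M₁ M₂ →
      (∃ k : ℕ, M₁.relIndex M₂ = p ^ k) → ⁅K, M₂⁆ ≤ M₁) →
    Nat.card G + Nat.card K ≤ n → ⁅K, N⁆ = ⊥ := by
  induction n with
  | zero =>
    intro G _ _ _ N _ _ _ _ p _ _ K _ _ _ hbound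
    have h1 : 0 < Nat.card G := Nat.card_pos
    have h2 : 0 < Nat.card K := Nat.card_pos
    omega
  | succ n IH =>
    intro G instG instF instS N hNnormal hNne hNmin hNfrattini p hp hpN K hKnormal hNK hcent hbound
    haveI := hNnormal
    haveI := hKnormal
    haveI : Fact p.Prime := ⟨hp⟩
    -- N is abelian
    have hNab : ∀ a ∈ N, ∀ b ∈ N, a * b = b * a := by
      have h1 : ⁅N, N⁆ ≤ N := Subgroup.commutator_le_right N N
      have hcn : (⁅N, N⁆ : Subgroup G).Normal := Subgroup.commutator_normal N N
      rcases hNmin ⁅N, N⁆ hcn h1 with h | h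
      · intro a ha b hb
        exact commutatorElement_eq_one_iff_mul_comm.mp
          (Subgroup.mem_bot.mp (h ▸ Subgroup.commutator_mem_commutator ha hb))
      · exfalso
        have h2 : ⁅N, N⁆ ⊔ (⊥ : Subgroup G) = N := by rw [sup_bot_eq, h]
        have h3 : N ≤ ⊥ := sol_step (inferInstance : (⊥ : Subgroup G).Normal) h2
        exact hNne (le_bot_iff.mp h3)
    have hNcentN : N ≤ centralizer (N : Set G) := by
      intro a ha
      rw [Subgroup.mem_centralizer_iff]
      intro b hb
      exact hNab b hb a ha
    -- N is a p-group
    have hNp : IsPGroup p N := by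
      set Np : Subgroup G :=
        { carrier := {x | x ∈ N ∧ ∃ k, x ^ p ^ k = 1}
          one_mem' := ⟨N.one_mem, 0, one_pow _⟩
          mul_mem' := by
            rintro x y ⟨hxN, kx, hkx⟩ ⟨hyN, ky, hky⟩
            refine ⟨N.mul_mem hxN hyN, kx + ky, ?_⟩
            have hcomm : Commute x y := hNab x hxN y hyN
            rw [hcomm.mul_pow, pow_add]
            rw [pow_mul, hkx, one_pow, one_mul, mul_comm (p ^ kx), pow_mul, hky, one_pow]
          inv_mem' := by
            rintro x ⟨hxN, k, hk⟩
            exact ⟨N.inv_mem hxN, k, by rw [inv_pow, hk, inv_one]⟩ } with hNpdef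
      have hNpnormal : Np.Normal := by
        constructor
        rintro x ⟨hxN, k, hk⟩ g
        refine ⟨hNnormal.conj_mem x hxN g, k, ?_⟩
        rw [conj_pow, hk, mul_one, mul_inv_cancel]
      have hNpne : Np ≠ ⊥ := by
        haveI : Fintype N := Fintype.ofFinite _
        have hpN' : p ∣ Fintype.card N := by
          rwa [← Nat.card_eq_fintype_card]
        obtain ⟨x, hx⟩ := exists_prime_orderOf_dvd_card p hpN' (G := N)
        intro hb
        have hx1 : (x : G) ∈ Np := by
          refine ⟨x.2, 1, ?_⟩
          have h2 : (x : G) ^ p = 1 := by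
            have h3 := pow_orderOf_eq_one x
            rw [hx] at h3
            exact_mod_cast congrArg Subtype.val h3
          rw [pow_one]; exact h2
        rw [hb] at hx1
        have h4 : (x : G) = 1 := Subgroup.mem_bot.mp hx1
        have h5 : orderOf (x : G) = 1 := by rw [h4, orderOf_one]
        rw [Subgroup.orderOf_coe, hx] at h5
        exact hp.one_lt.ne' h5
      have hNple : Np ≤ N := fun x hx => hx.1
      rcases hNmin Np hNpnormal hNple with h | h
      · exact absurd h hNpne
      · intro g
        have hg : (g : G) ∈ Np := by rw [h]; exact g.2
        obtain ⟨-, k, hk⟩ := hg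
        exact ⟨k, by ext; push_cast; exact hk⟩
    obtain ⟨eN, heN⟩ := IsPGroup.iff_card.mp hNp
    -- case split on existence of a coprime nontrivial normal subgroup
    by_cases hred : ∃ Z : Subgroup G, Z.Normal ∧ Z ≠ ⊥ ∧ Nat.Coprime (Nat.card Z) p
    · -- quotient by Z and use induction on the group order
      obtain ⟨Z, hZn, hZne, hZcop⟩ := hred
      haveI := hZn
      set π := QuotientGroup.mk' Z with hπdef
      have hπsurj : Function.Surjective π := QuotientGroup.mk'_surjective Z
      have hπker : π.ker = Z := QuotientGroup.ker_mk' Z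
      set N' := N.map π with hN'def
      set K' := K.map π with hK'def
      have hNZcop : Nat.Coprime (Nat.card N) (Nat.card Z) := by
        rw [heN]
        exact hZcop.symm.pow_left eN
      have hNZ : N ⊓ Z = ⊥ := inf_eq_bot_of_coprime hNZcop
      have hmemZ : ∀ x : G, π x = 1 ↔ x ∈ Z := by
        intro x
        exact QuotientGroup.eq_one_iff x
      have hN'ne : N' ≠ ⊥ := by
        intro h
        have h2 : N ≤ Z := by
          intro x hx
          exact (hmemZ x).mp (Subgroup.mem_bot.mp (h ▸ Subgroup.mem_map_of_mem π hx))
        have h3 : N ≤ ⊥ := by rw [← hNZ]; exact le_inf le_rfl h2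
        exact hNne (le_bot_iff.mp h3)
      have hN'normal : N'.Normal := hNnormal.map π hπsurj
      have hK'normal : K'.Normal := hKnormal.map π hπsurj
      have hN'K' : N' ≤ K' := Subgroup.map_mono hNK
      have hZleB : ∀ M' : Subgroup (G ⧸ Z), Z ≤ M'.comap π := by
        intro M' z hz
        show π z ∈ M'
        rw [(hmemZ z).mpr hz]
        exact M'.one_mem
      -- minimality of N'
      have hN'min : ∀ M' : Subgroup (G ⧸ Z), M'.Normal → M' ≤ N' → M' = ⊥ ∨ M' = N' := by
        intro M' hM'n hM'le
        set B := M'.comap π with hBdef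
        have hBn : B.Normal := hM'n.comap π
        have hBNZ : B ≤ N ⊔ Z := by
          intro b hb
          have h1 : π b ∈ N' := hM'le hb
          obtain ⟨a, ha, hab⟩ := Subgroup.mem_map.mp h1
          have h2 : a⁻¹ * b ∈ Z := by
            rw [← hmemZ, map_mul, map_inv, hab, inv_mul_cancel]
          have h3 : b = a * (a⁻¹ * b) := by group
          rw [h3]
          exact Subgroup.mul_mem _ (le_sup_left (α := Subgroup G) ha)
            (le_sup_right (α := Subgroup G) h2)
        have hM'eq : M' = B.map π := (Subgroup.map_comap_eq_self_of_surjective hπsurj M').symm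
        rcases hNmin (B ⊓ N) (inf_normal hBn hNnormal) inf_le_right with h | h
        · left
          rw [hM'eq, Subgroup.map_eq_bot_iff, hπker]
          intro b hb
          have h1 : b ∈ (N : Set G) * (Z : Set G) := by
            rw [← Subgroup.mul_normal N Z]
            exact hBNZ hb
          obtain ⟨nn, hnn, z, hz, rfl⟩ := h1
          have hzB : z ∈ B := hZleB M' hz
          have hnB : nn ∈ B := by
            have h4 : nn = nn * z * z⁻¹ := by group
            rw [h4]
            exact B.mul_mem hb (B.inv_mem hzB)
          have h5 : nn ∈ (⊥ : Subgroup G) := h ▸ Subgroup.mem_inf.mpr ⟨hnB, hnn⟩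
          have h6 : nn = 1 := Subgroup.mem_bot.mp h5
          simpa [h6] using hz
        · right
          have hNB : N ≤ B := h ▸ inf_le_left
          rw [hM'eq]
          apply le_antisymm
          · intro y hy
            obtain ⟨b, hb, rfl⟩ := Subgroup.mem_map.mp hy
            have h1 : b ∈ (N : Set G) * (Z : Set G) := by
              rw [← Subgroup.mul_normal N Z]
              exact hBNZ hb
            obtain ⟨nn, hnn, z, hz, rfl⟩ := h1
            have h2 : π (nn * z) = π nn := by
              rw [map_mul, (hmemZ z).mpr hz, mul_one]
            rw [h2]
            exact Subgroup.mem_map_of_mem π hnn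
          · exact Subgroup.map_mono hNB
      -- frattini is preserved
      have hN'frat : N' ≤ frattini (G ⧸ Z) := by
        have h1 : N.map π ≤ (frattini G).map π := Subgroup.map_mono hNfrattini
        have h2 : (frattini G).map π ≤ frattini (G ⧸ Z) :=
          Subgroup.map_le_iff_le_comap.mpr (frattini_le_comap_frattini_of_surjective hπsurj)
        exact le_trans h1 h2
      -- p divides card N'
      have hN'p : IsPGroup p N' := hNp.map π
      have hpN' : p ∣ Nat.card N' := by
        obtain ⟨e, he⟩ := IsPGroup.iff_card.mp hN'p
        rcases Nat.eq_zero_or_pos e with h | h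
        · exfalso
          rw [h, pow_zero] at he
          exact hN'ne (Subgroup.card_eq_one.mp he)
        · rw [he]
          exact dvd_pow_self p h.ne'
      -- transported centralization hypothesis
      have hcent' : ∀ M₁ M₂ : Subgroup (G ⧸ Z), N' ≤ M₁ → M₂ ≤ K' →
          IsChiefFactor (G ⧸ Z) M₁ M₂ → (∃ k : ℕ, M₁.relIndex M₂ = p ^ k) →
          ⁅K', M₂⁆ ≤ M₁ := by
        intro M₁ M₂ h₁ h₂ hchief hpow
        obtain ⟨hM₁n, hM₂n, hM₁₂, hnob⟩ := hchief
        have hM₁K' : M₁ ≤ K' := le_trans hM₁₂.le h₂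
        set C₁ := M₁.comap π ⊓ K with hC₁def
        set C₂ := M₂.comap π ⊓ K with hC₂def
        have hZK₁ : Z ⊓ K ≤ C₁ := inf_le_inf (hZleB M₁) le_rfl
        have hNC₁ : N ≤ C₁ := by
          apply le_inf _ hNK
          intro x hx
          exact h₁ (Subgroup.mem_map_of_mem π hx)
        have hC₂K : C₂ ≤ K := inf_le_right
        have hC₁K : C₁ ≤ K := inf_le_right
        have hC₁₂ : C₁ ≤ C₂ := inf_le_inf (Subgroup.comap_mono hM₁₂.le) le_rfl
        have hmap₂ : C₂.map π = M₂ := by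
          apply le_antisymm
          · intro y hy
            obtain ⟨b, hb, rfl⟩ := Subgroup.mem_map.mp hy
            exact (Subgroup.mem_inf.mp hb).1
          · intro y hy
            obtain ⟨k, hk, rfl⟩ := Subgroup.mem_map.mp (h₂ hy)
            exact Subgroup.mem_map_of_mem π (Subgroup.mem_inf.mpr ⟨Subgroup.mem_comap.mpr hy, hk⟩)
        have hmap₁ : C₁.map π = M₁ := by
          apply le_antisymm
          · intro y hy
            obtain ⟨b, hb, rfl⟩ := Subgroup.mem_map.mp hy
            exact (Subgroup.mem_inf.mp hb).1
          · intro y hy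
            obtain ⟨k, hk, rfl⟩ := Subgroup.mem_map.mp (hM₁K' hy)
            exact Subgroup.mem_map_of_mem π (Subgroup.mem_inf.mpr ⟨Subgroup.mem_comap.mpr hy, hk⟩)
        have hC₁₂lt : C₁ < C₂ := by
          refine lt_of_le_of_ne hC₁₂ (fun h => ?_)
          rw [← hmap₁, ← hmap₂, h] at hM₁₂
          exact hM₁₂.ne rfl
        have hC₁n : C₁.Normal := inf_normal (hM₁n.comap π) hKnormal
        have hC₂n : C₂.Normal := inf_normal (hM₂n.comap π) hKnormal
        have hchiefC : IsChiefFactor G C₁ C₂ := by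
          refine ⟨hC₁n, hC₂n, hC₁₂lt, ?_⟩
          rintro ⟨W, hWn, hW1, hW2⟩
          apply hnob
          haveI := hWn
          have hWK : W ≤ K := le_trans hW2.le hC₂K
          refine ⟨(W ⊔ Z).map π, Subgroup.Normal.map inferInstance π hπsurj, ?_, ?_⟩
          · refine lt_of_le_of_ne ?_ (fun h => ?_)
            · rw [← hmap₁]
              exact Subgroup.map_mono (le_trans hW1.le le_sup_left)
            · have hWM₁ : W ≤ M₁.comap π := by
                intro w hw
                show π w ∈ M₁
                rw [h]
                exact Subgroup.mem_map_of_mem π (le_sup_left (α := Subgroup G) hw)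
              exact hW1.not_ge (le_inf hWM₁ hWK)
          · refine lt_of_le_of_ne ?_ (fun h => ?_)
            · rw [Subgroup.map_le_iff_le_comap]
              exact sup_le (le_trans hW2.le inf_le_left) (hZleB M₂)
            · have hC₂W : C₂ ≤ W := by
                intro c hc
                have h1 : π c ∈ (W ⊔ Z).map π := by
                  rw [h]
                  exact Subgroup.mem_comap.mp (Subgroup.mem_inf.mp hc).1
                have h1' : c ∈ W ⊔ Z := by
                  have h3 : c ∈ ((W ⊔ Z).map π).comap π := Subgroup.mem_comap.mpr h1
                  rw [Subgroup.comap_map_eq, hπker, sup_assoc, sup_idem] at h3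
                  exact h3
                have h2 : c ∈ (W : Set G) * (Z : Set G) := by
                  rw [← Subgroup.mul_normal W Z]
                  exact h1'
                obtain ⟨w, hw, z, hz, rfl⟩ := h2
                have hzK : z ∈ K := by
                  have h4 : z = w⁻¹ * (w * z) := by group
                  rw [h4]
                  exact K.mul_mem (K.inv_mem (hWK hw)) (hC₂K hc)
                have hzC₁ : z ∈ C₁ := hZK₁ (Subgroup.mem_inf.mpr ⟨hz, hzK⟩)
                exact W.mul_mem hw (hW1.le hzC₁)
              exact hW2.not_ge hC₂W
        -- relindex is preserved
        have htZK : 0 < Nat.card (Z ⊓ K : Subgroup G) := Nat.card_pos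
        have hker₂ : π.ker ⊓ C₂ = Z ⊓ K := by
          rw [hπker]
          apply le_antisymm
          · exact inf_le_inf le_rfl hC₂K
          · exact le_inf inf_le_left (le_trans hZK₁ hC₁₂)
        have hker₁ : π.ker ⊓ C₁ = Z ⊓ K := by
          rw [hπker]
          apply le_antisymm
          · exact inf_le_inf le_rfl hC₁K
          · exact le_inf inf_le_left hZK₁
        have e₂ := card_map_mul π C₂
        rw [hker₂, hmap₂] at e₂
        have e₁ := card_map_mul π C₁
        rw [hker₁, hmap₁] at e₁
        have f₁ : C₁.relIndex C₂ * Nat.card C₁ = Nat.card C₂ := relindex_mul_card_of_le hC₁₂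
        have f₂ : M₁.relIndex M₂ * Nat.card M₁ = Nat.card M₂ := relindex_mul_card_of_le hM₁₂.le
        have hrelc : C₁.relIndex C₂ = M₁.relIndex M₂ := by
          have g1 : C₁.relIndex C₂ * Nat.card M₁ * Nat.card (Z ⊓ K : Subgroup G)
              = Nat.card M₂ * Nat.card (Z ⊓ K : Subgroup G) := by
            rw [mul_assoc, e₁, f₁, ← e₂]
          have g2 : C₁.relIndex C₂ * Nat.card M₁ = Nat.card M₂ :=
            Nat.eq_of_mul_eq_mul_right htZK g1
          rw [← f₂] at g2
          exact Nat.eq_of_mul_eq_mul_right Nat.card_pos g2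
        have h5 : ⁅K, C₂⁆ ≤ C₁ := hcent C₁ C₂ hNC₁ hC₂K hchiefC (by rw [hrelc]; exact hpow)
        calc ⁅K', M₂⁆ = ⁅K.map π, C₂.map π⁆ := by rw [hmap₂]
        _ = (⁅K, C₂⁆).map π := (Subgroup.map_commutator K C₂ π).symm
        _ ≤ C₁.map π := Subgroup.map_mono h5
        _ = M₁ := hmap₁
      -- cardinality bound
      have hcardG : Nat.card G = Nat.card (G ⧸ Z) * Nat.card Z :=
        Subgroup.card_eq_card_quotient_mul_card_subgroup Z
      have hZ2 : 2 ≤ Nat.card Z := by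
        have := (Subgroup.one_lt_card_iff_ne_bot Z).mpr hZne
        omega
      have hGQpos : 0 < Nat.card (G ⧸ Z) := Nat.card_pos
      have hGlt : Nat.card (G ⧸ Z) < Nat.card G := by
        calc Nat.card (G ⧸ Z) < Nat.card (G ⧸ Z) * 2 := by omega
        _ ≤ Nat.card (G ⧸ Z) * Nat.card Z := Nat.mul_le_mul_left _ hZ2
        _ = Nat.card G := hcardG.symm
      have hK'le : Nat.card K' ≤ Nat.card K := by
        have hmm := card_map_mul π K
        have hpos : 0 < Nat.card (π.ker ⊓ K : Subgroup G) := Nat.card_pos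
        calc Nat.card K' = Nat.card K' * 1 := (mul_one _).symm
        _ ≤ Nat.card K' * Nat.card (π.ker ⊓ K : Subgroup G) := Nat.mul_le_mul_left _ hpos
        _ = Nat.card K := hmm
      have hbound' : Nat.card (G ⧸ Z) + Nat.card K' ≤ n := by omega
      have hres := IH (G ⧸ Z) N' hN'normal hN'ne hN'min hN'frat p hp hpN' K' hK'normal
        hN'K' hcent' hbound'
      -- pull back the conclusion
      have h1 : (⁅K, N⁆).map π = ⊥ := by
        rw [Subgroup.map_commutator]
        exact hres
      rw [Subgroup.map_eq_bot_iff, hπker] at h1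
      have h3 : ⁅K, N⁆ ≤ N := Subgroup.commutator_le_right K N
      have h4 : ⁅K, N⁆ ≤ N ⊓ Z := le_inf h3 h1
      rw [hNZ] at h4
      exact le_bot_iff.mp h4
    · -- reduced case: no nontrivial normal subgroup of order coprime to p
      push_neg at hred
      have hredn : ∀ Z : Subgroup G, Z.Normal → Nat.Coprime (Nat.card Z) p → Z = ⊥ := by
        intro Z h1 h2
        by_contra h3
        exact (hred Z h1 h3) h2
      by_cases hKcent : K ≤ centralizer (N : Set G)
      · exact Subgroup.commutator_eq_bot_iff_le_centralizer.mpr hKcent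
      have hCn : (centralizer (N : Set G)).Normal := centralizer_normal hNnormal
      set X := K ⊓ centralizer (N : Set G) with hXdef
      have hXnormal : X.Normal := inf_normal hKnormal hCn
      have hNX : N ≤ X := le_inf hNK hNcentN
      have hXK : X < K :=
        lt_of_le_of_ne inf_le_left (fun h => hKcent (by rw [← h]; exact inf_le_right))
      obtain ⟨M, ⟨hMnormal, hXM, hMK⟩, hMmax⟩ := exists_max_subgroup
        (fun W => W.Normal ∧ X ≤ W ∧ W < K) ⟨X, hXnormal, le_refl X, hXK⟩
      have hmax' : ∀ W : Subgroup G, W.Normal → M ≤ W → W ≤ K → W = M ∨ W = K := by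
        intro W h1 h2 h3
        by_cases h4 : W = K
        · right; exact h4
        · left
          have h5 : W < K := lt_of_le_of_ne h3 h4
          exact (Subgroup.eq_of_le_of_card_ge h2 (hMmax W ⟨h1, le_trans hXM h2, h5⟩)).symm
      have hNM : N ≤ M := le_trans hNX hXM
      have hMcentN : ⁅M, N⁆ = ⊥ := by
        have hb : Nat.card G + Nat.card M ≤ n := by
          have := card_lt_of_lt hMK
          omega
        exact IH G N hNnormal hNne hNmin hNfrattini p hp hpN M hMnormal hNM
          (fun M₁ M₂ h1 h2 h3 h4 =>
            le_trans (Subgroup.commutator_mono hMK.le (le_refl M₂))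
              (hcent M₁ M₂ h1 (le_trans h2 hMK.le) h3 h4)) hb
      have hMC : M ≤ centralizer (N : Set G) :=
        Subgroup.commutator_eq_bot_iff_le_centralizer.mp hMcentN
      -- structure of K/M
      obtain ⟨r, hrprime, ⟨m, hrel⟩, hQcover⟩ := top_structure hMnormal hKnormal hMK hmax'
      haveI : Fact r.Prime := ⟨hrprime⟩
      obtain ⟨Q⟩ : Nonempty (Sylow r K) := inferInstance
      set Qt := Subgroup.map K.subtype (Q : Subgroup K) with hQtdef
      have hKMQ : M ⊔ Qt = K := hQcover Q
      have hQtK : Qt ≤ K := Subgroup.map_subtype_le _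
      have hQtp : IsPGroup r Qt := Q.isPGroup'.map K.subtype
      -- a helper to finish given a nontrivial element of N central in K
      have finisher : ∀ n₀ : G, n₀ ∈ N → n₀ ≠ 1 → (∀ k ∈ K, k * n₀ = n₀ * k) →
          ⁅K, N⁆ = ⊥ := by
        intro n₀ h1 h2 h3
        have hn₀C : n₀ ∈ centralizer (K : Set G) := by
          rw [Subgroup.mem_centralizer_iff]
          exact h3
        have hYn : (N ⊓ centralizer (K : Set G)).Normal :=
          inf_normal hNnormal (centralizer_normal hKnormal)
        rcases hNmin _ hYn inf_le_left with h | h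
        · exfalso
          have h4 : n₀ ∈ (⊥ : Subgroup G) := h ▸ Subgroup.mem_inf.mpr ⟨h1, hn₀C⟩
          exact h2 (Subgroup.mem_bot.mp h4)
        · apply Subgroup.commutator_eq_bot_iff_le_centralizer.mpr
          intro k hk
          rw [Subgroup.mem_centralizer_iff]
          intro b hb
          have hb' : b ∈ N ⊓ centralizer (K : Set G) := by rw [← h] at hb; exact hb
          exact (Subgroup.mem_centralizer_iff.mp (Subgroup.mem_inf.mp hb').2 k hk).symm
      by_cases hrp : r = p
      · -- p-case : fixed points of Qt on N
        have hQtpp : IsPGroup p Qt := by rw [← hrp]; exact hQtp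
        obtain ⟨n₀, hn₀N, hn₀ne, hn₀comm⟩ := exists_fixed hp hNnormal hQtpp hpN
        apply finisher n₀ hn₀N hn₀ne
        intro k hk
        rw [← hKMQ] at hk
        have hsup : M ⊔ Qt ≤ centralizer ({n₀} : Set G) := by
          apply sup_le
          · intro x hx
            rw [Subgroup.mem_centralizer_iff]
            intro y hy
            rw [Set.mem_singleton_iff] at hy
            subst hy
            exact Subgroup.mem_centralizer_iff.mp (hMC hx) y hn₀N
          · intro x hx
            rw [Subgroup.mem_centralizer_iff]
            intro y hy
            rw [Set.mem_singleton_iff] at hy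
            subst hy
            exact (hn₀comm x hx).symm
        have h6 := Subgroup.mem_centralizer_iff.mp (hsup hk) n₀ (Set.mem_singleton n₀)
        exact h6.symm
      · -- r ≠ p
        obtain ⟨Pst, ⟨hPstn, hPstp, hNPst, hPstK⟩, hPstmax⟩ := exists_max_subgroup
          (fun P : Subgroup G => P.Normal ∧ IsPGroup p P ∧ N ≤ P ∧ P ≤ K)
          ⟨N, hNnormal, hNp, le_refl N, hNK⟩
        have hPstC : Pst ≤ centralizer (N : Set G) := by
          obtain ⟨n₁, hn₁N, hn₁ne, hn₁comm⟩ := exists_fixed hp hNnormal hPstp hpN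
          have hYn : (N ⊓ centralizer (Pst : Set G)).Normal :=
            inf_normal hNnormal (centralizer_normal hPstn)
          rcases hNmin _ hYn inf_le_left with h | h
          · exfalso
            have hn₁C : n₁ ∈ centralizer (Pst : Set G) := by
              rw [Subgroup.mem_centralizer_iff]
              intro a ha
              exact hn₁comm a ha
            have h4 : n₁ ∈ (⊥ : Subgroup G) := h ▸ Subgroup.mem_inf.mpr ⟨hn₁N, hn₁C⟩
            exact hn₁ne (Subgroup.mem_bot.mp h4)
          · intro x hx
            rw [Subgroup.mem_centralizer_iff]
            intro b hb
            have hb' : b ∈ N ⊓ centralizer (Pst : Set G) := by rw [← h] at hb; exact hb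
            exact (Subgroup.mem_centralizer_iff.mp (Subgroup.mem_inf.mp hb').2 x hx).symm
        have hPstM : Pst ≤ M := le_trans (le_inf hPstK hPstC) hXM
        -- W := M ⊓ C(Pst) is contained in Pst
        have hWle : M ⊓ centralizer (Pst : Set G) ≤ Pst := by
          by_contra hnot
          set W := M ⊓ centralizer (Pst : Set G) with hWdef
          have hWnormal : W.Normal := inf_normal hMnormal (centralizer_normal hPstn)
          have hWM : W ≤ M := inf_le_left
          have hPlt : Pst < W ⊔ Pst := by
            refine lt_of_le_of_ne le_sup_right (fun h => hnot ?_)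
            have h1 : W ≤ W ⊔ Pst := le_sup_left
            rw [← h] at h1
            exact h1
          haveI := hWnormal
          haveI := hPstn
          have hWPn : (W ⊔ Pst).Normal := inferInstance
          obtain ⟨V, ⟨hVnormal, hPV, hVWP⟩, hVmin⟩ := exists_min_subgroup
            (fun V : Subgroup G => V.Normal ∧ Pst < V ∧ V ≤ W ⊔ Pst)
            ⟨W ⊔ Pst, hWPn, hPlt, le_refl _⟩
          have hVM : V ≤ M := le_trans hVWP (sup_le hWM hPstM)
          have hVK : V ≤ K := le_trans hVM hMK.le
          haveI := hVnormal
          have hVV : ⁅V, V⁆ ≤ Pst := by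
            have hAn : ((⁅V, V⁆ : Subgroup G) ⊔ Pst).Normal := inferInstance
            have hAV : ⁅V, V⁆ ⊔ Pst ≤ V := sup_le (Subgroup.commutator_le_right V V) hPV.le
            rcases lt_or_eq_of_le (le_sup_right : Pst ≤ ⁅V, V⁆ ⊔ Pst) with hA | hA
            · exfalso
              have hcard := hVmin _ ⟨hAn, hA, le_trans hAV hVWP⟩
              have hAV' : ⁅V, V⁆ ⊔ Pst = V := Subgroup.eq_of_le_of_card_ge hAV hcard
              exact hPV.not_ge (sol_step hPstn hAV')
            · have h1 : ⁅V, V⁆ ≤ ⁅V, V⁆ ⊔ Pst := le_sup_left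
              rw [← hA] at h1
              exact h1
          have hcop_comm : ∀ d ∈ V, Nat.Coprime (orderOf d) p → ∀ e ∈ V, d * e = e * d := by
            intro d hdV hdcop e heV
            have hdM : d ∈ M := hVM hdV
            have hdK : d ∈ K := hMK.le hdM
            have hdN : ∀ nn ∈ N, d * nn = nn * d := by
              intro nn hnn
              exact (Subgroup.mem_centralizer_iff.mp (hMC hdM) nn hnn).symm
            have hdPst : ∀ g ∈ Pst, d * g = g * d :=
              stab_chain hp hNnormal hPstp hPstK hcent (Nat.card Pst) Pst le_rfl hPstn hNPst
                le_rfl d hdK hdcop hdN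
            have hc₀ : d * e * d⁻¹ * e⁻¹ ∈ Pst := by
              have h1 : ⁅d, e⁆ ∈ ⁅V, V⁆ := Subgroup.commutator_mem_commutator hdV heV
              exact hVV (by simpa [commutatorElement_def] using h1)
            exact commutator_trick hdcop (hdPst _ hc₀) (mem_pgroup hPstp hc₀)
          set R : Subgroup G :=
            { carrier := {x | x ∈ V ∧ Nat.Coprime (orderOf x) p}
              one_mem' := ⟨V.one_mem, by simp⟩
              mul_mem' := by
                rintro x y ⟨hxV, hxc⟩ ⟨hyV, hyc⟩
                refine ⟨V.mul_mem hxV hyV, ?_⟩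
                have hcomm : Commute x y := hcop_comm x hxV hxc y hyV
                have h1 : orderOf (x * y) ∣ (orderOf x).lcm (orderOf y) :=
                  hcomm.orderOf_mul_dvd_lcm
                have h2 : (orderOf x).lcm (orderOf y) ∣ orderOf x * orderOf y :=
                  Nat.lcm_dvd (Dvd.intro _ rfl) (Dvd.intro_left _ rfl)
                exact Nat.Coprime.coprime_dvd_left (h1.trans h2) (Nat.Coprime.mul hxc hyc)
              inv_mem' := by
                rintro x ⟨hxV, hxc⟩
                exact ⟨V.inv_mem hxV, by rwa [orderOf_inv]⟩ } with hRdef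
          have hRnormal : R.Normal := by
            constructor
            rintro x ⟨hxV, hxc⟩ g
            refine ⟨hVnormal.conj_mem x hxV g, ?_⟩
            have h1 : orderOf (g * x * g⁻¹) = orderOf x := by
              have h2 := orderOf_injective (MulAut.conj g).toMonoidHom
                (MulEquiv.injective _) x
              simpa [MulAut.conj_apply] using h2
            rwa [h1]
          have hRcop : Nat.Coprime (Nat.card R) p := by
            refine Nat.Coprime.symm ((hp.coprime_iff_not_dvd).mpr ?_)
            intro hdvd
            haveI : Fintype R := Fintype.ofFinite _
            rw [Nat.card_eq_fintype_card] at hdvd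
            obtain ⟨z, hz⟩ := exists_prime_orderOf_dvd_card p hdvd (G := R)
            have h1 : orderOf (z : G) = p := by rw [Subgroup.orderOf_coe, hz]
            have h2 : Nat.Coprime (orderOf (z : G)) p := z.2.2
            rw [h1] at h2
            have h3 : p = 1 := by rwa [Nat.Coprime, Nat.gcd_self] at h2
            exact hp.one_lt.ne' h3
          have hRbot : R = ⊥ := hredn R hRnormal hRcop
          have hVp : IsPGroup p V := by
            intro y
            have hy : (y : G) ∈ V := y.2
            obtain ⟨hcop', hback⟩ := pcomp_spec hp (y : G)
            have hdR : (y : G) ^ p ^ (orderOf (y : G)).factorization p ∈ R :=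
              ⟨V.pow_mem hy _, hcop'⟩
            rw [hRbot] at hdR
            obtain ⟨k, hk⟩ := hback (Subgroup.mem_bot.mp hdR)
            exact ⟨k, by ext; push_cast; exact hk⟩
          have hcardle : Nat.card V ≤ Nat.card Pst :=
            hPstmax V ⟨hVnormal, hVp, le_trans hNPst hPV.le, hVK⟩
          exact absurd (card_lt_of_lt hPV) (not_lt.mpr hcardle)
        -- M is a p-group
        have hMp : IsPGroup p M := by
          intro y
          have hy : (y : G) ∈ M := y.2
          obtain ⟨hcop', hback⟩ := pcomp_spec hp (y : G)
          set d := (y : G) ^ p ^ (orderOf (y : G)).factorization p with hddef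
          have hdM : d ∈ M := M.pow_mem hy _
          have hdK : d ∈ K := hMK.le hdM
          have hdN : ∀ nn ∈ N, d * nn = nn * d := by
            intro nn hnn
            exact (Subgroup.mem_centralizer_iff.mp (hMC hdM) nn hnn).symm
          have hdPst : ∀ g ∈ Pst, d * g = g * d :=
            stab_chain hp hNnormal hPstp hPstK hcent (Nat.card Pst) Pst le_rfl hPstn hNPst
              le_rfl d hdK hcop' hdN
          have hdW : d ∈ M ⊓ centralizer (Pst : Set G) := by
            refine Subgroup.mem_inf.mpr ⟨hdM, ?_⟩
            rw [Subgroup.mem_centralizer_iff]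
            intro g hg
            exact (hdPst g hg).symm
          have hdPst' : d ∈ Pst := hWle hdW
          have hd1 : d = 1 := pow_order_coprime_eq_one hcop' (mem_pgroup hPstp hdPst')
            (pow_orderOf_eq_one d)
          obtain ⟨k, hk⟩ := hback hd1
          exact ⟨k, by ext; push_cast; exact hk⟩
        -- climb
        have hclimb : M ≤ N ⊔ centralizer (Qt : Set G) :=
          climb hp hrprime hrp hNnormal hMp hMK.le hQtK hQtp hcent (Nat.card M) M le_rfl
            hMnormal hNM le_rfl
        -- Frattini argument
        have hfr : normalizer ((Subgroup.map K.subtype ↑Q : Subgroup G) : Set G) ⊔ K = ⊤ :=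
          Sylow.normalizer_sup_eq_top Q
        have htop : (⊤ : Subgroup G) ≤ normalizer (Qt : Set G) ⊔ N := by
          rw [← hfr]
          apply sup_le
          · exact le_sup_left
          · rw [← hKMQ]
            apply sup_le
            · refine le_trans hclimb ?_
              apply sup_le le_sup_right
              exact le_trans centralizer_le_normalizer' le_sup_left
            · exact le_trans Subgroup.le_normalizer le_sup_left
        have hTtop : normalizer (Qt : Set G) ⊔ frattini G = ⊤ := by
          apply le_antisymm le_top
          refine le_trans htop ?_
          exact sup_le le_sup_left (le_trans hNfrattini le_sup_right)
        have hQnt : normalizer (Qt : Set G) = ⊤ := frattini_nongenerating hTtop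
        haveI hQtnormal : Qt.Normal := Subgroup.normalizer_eq_top_iff.mp hQnt
        have hQtNbot : Qt ⊓ N = ⊥ := by
          apply inf_eq_bot_of_coprime
          obtain ⟨a, ha⟩ := IsPGroup.iff_card.mp hQtp
          rw [ha, heN]
          exact Nat.Coprime.pow _ _ ((Nat.coprime_primes hrprime hp).mpr hrp)
        have hcomm2 : ⁅Qt, N⁆ = ⊥ := by
          apply le_bot_iff.mp
          rw [← hQtNbot]
          exact le_inf (Subgroup.commutator_le_left Qt N) (Subgroup.commutator_le_right Qt N)
        have hQtC : Qt ≤ centralizer (N : Set G) :=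
          Subgroup.commutator_eq_bot_iff_le_centralizer.mp hcomm2
        apply Subgroup.commutator_eq_bot_iff_le_centralizer.mpr
        rw [← hKMQ]
        exact sup_le hMC hQtC

end FrattiniChief

theorem frattini_chief_centralize (G : Type*) [Group G] [Finite G] [Group.IsSolvable G]
    (N : Subgroup G) (hNnormal : N.Normal) (hNne : N ≠ ⊥)
    (hNmin : ∀ M : Subgroup G, M.Normal → M ≤ N → M = ⊥ ∨ M = N)
    (hNfrattini : N ≤ frattini G)
    (p : ℕ) (hp : p.Prime) (hpN : p ∣ Nat.card N)
    (K : Subgroup G) (hKnormal : K.Normal) (hNK : N ≤ K)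
    (hcent : ∀ M₁ M₂ : Subgroup G, N ≤ M₁ → M₂ ≤ K → IsChiefFactor G M₁ M₂ →
      (∃ k : ℕ, M₁.relIndex M₂ = p ^ k) → ⁅K, M₂⁆ ≤ M₁) :
    ⁅K, N⁆ = ⊥ :=
  FrattiniChief.main (Nat.card G + Nat.card K) G N hNnormal hNne hNmin hNfrattini
    p hp hpN K hKnormal hNK hcent le_rfl
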